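/- Let G be a nilpotent group with G = Z_i(G)·H for a subgroup H. Then for all 1 ≤ j ≤ i, γ_j(G) ≤ Z_{i-j+1}(G)·γ_j(H). -/

import Mathlib

open Subgroup Pointwise
open scoped commutatorElement

/-- Three subgroups lemma relative to a normal subgroup. -/
theorem my_three_subgroups {G : Type*} [Group G] (A B C N : Subgroup G) [N.Normal]
    (h1 : ⁅⁅B, C⁆, A⁆ ≤ N) (h2 : ⁅⁅C, A⁆, B⁆ ≤ N) : ⁅⁅A, B⁆, C⁆ ≤ N := by
  let f := QuotientGroup.mk' N
  have key : Subgroup.map f ⁅⁅A, B⁆, C⁆ = ⊥ := by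
    rw [Subgroup.map_commutator, Subgroup.map_commutator]
    apply Subgroup.commutator_commutator_eq_bot_of_rotate
    · rw [← Subgroup.map_commutator, ← Subgroup.map_commutator,
        Subgroup.map_eq_bot_iff, QuotientGroup.ker_mk']
      exact h1
    · rw [← Subgroup.map_commutator, ← Subgroup.map_commutator,
        Subgroup.map_eq_bot_iff, QuotientGroup.ker_mk']
      exact h2
  rwa [Subgroup.map_eq_bot_iff, QuotientGroup.ker_mk'] at key

theorem my_ucs_base {G : Type*} [Group G] (n : ℕ) :
    ⁅Subgroup.upperCentralSeries G n, (⊤ : Subgroup G)⁆ ≤ Subgroup.upperCentralSeries G (n - 1) := by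
  cases n with
  | zero =>
    rw [Subgroup.upperCentralSeries_zero, Subgroup.commutator_bot_left]
  | succ k =>
    rw [Subgroup.commutator_le]
    intro z hz g _
    simpa [commutatorElement_def] using (Subgroup.mem_upperCentralSeries_succ_iff.mp hz g)

/-- `⁅γ_{m+1}(G), Z_n(G)⁆ ≤ Z_{n-m-1}(G)`. -/
theorem my_lcs_ucs {G : Type*} [Group G] (m : ℕ) :
    ∀ n : ℕ, ⁅(⊤ : Subgroup G).lowerCentralSeries m, Subgroup.upperCentralSeries G n⁆ ≤
      Subgroup.upperCentralSeries G (n - (m + 1)) := by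
  induction m with
  | zero =>
    intro n
    rw [Subgroup.lowerCentralSeries_zero, Subgroup.commutator_comm]
    exact my_ucs_base n
  | succ m ih =>
    intro n
    have lcs_succ : (⊤ : Subgroup G).lowerCentralSeries (m + 1) = ⁅(⊤ : Subgroup G).lowerCentralSeries m, ⊤⁆ := rfl
    rw [lcs_succ]
    have e1 : (n - 1) - (m + 1) = n - (m + 1 + 1) := by omega
    have e2 : (n - (m + 1)) - 1 = n - (m + 1 + 1) := by omega
    apply my_three_subgroups
    · refine le_trans (Subgroup.commutator_mono
        ((Subgroup.commutator_comm _ _).le.trans (my_ucs_base n)) le_rfl) ?_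
      rw [Subgroup.commutator_comm, ← e1]
      exact ih (n - 1)
    · refine le_trans (Subgroup.commutator_mono
        ((Subgroup.commutator_comm _ _).le.trans (ih n)) le_rfl) ?_
      rw [← e2]
      exact my_ucs_base _

/-- If `G = Z_i(G)·H` then for all `1 ≤ j ≤ i`, `γ_j(G) ≤ Z_{i-j+1}(G)·γ_j(H)`.
Note `(⊤ : Subgroup G).lowerCentralSeries (j-1)` is `γ_j(G)`. -/
theorem stmt_3 {G : Type*} [Group G] [Group.IsNilpotent G]
    (H : Subgroup G) (i : ℕ)
    (hGH : ∀ g : G, ∃ z ∈ _root_.upperCentralSeries G i, ∃ h ∈ H, g = z * h) :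
    ∀ j : ℕ, 1 ≤ j → j ≤ i →
      ∀ g ∈ (⊤ : Subgroup G).lowerCentralSeries (j - 1),
        ∃ z ∈ _root_.upperCentralSeries G (i - j + 1),
          ∃ h ∈ Subgroup.map H.subtype ((⊤ : Subgroup H).lowerCentralSeries (j - 1)), g = z * h := by
  have key : ∀ m : ℕ, m + 1 ≤ i →
      (⊤ : Subgroup G).lowerCentralSeries m ≤
        Subgroup.upperCentralSeries G (i - m) ⊔ Subgroup.map H.subtype ((⊤ : Subgroup H).lowerCentralSeries m) := by
    intro m
    induction m with
    | zero =>
      intro _ g _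
      obtain ⟨z, hz, h, hh, rfl⟩ := hGH g
      refine Subgroup.mul_mem _ (Subgroup.mem_sup_left (by exact hz))
        (Subgroup.mem_sup_right ⟨⟨h, hh⟩, Subgroup.mem_top _, rfl⟩)
    | succ m ih =>
      intro hm
      have ih' := ih (by omega)
      have lcs_succ : (⊤ : Subgroup G).lowerCentralSeries (m + 1) = ⁅(⊤ : Subgroup G).lowerCentralSeries m, ⊤⁆ := rfl
      rw [lcs_succ, Subgroup.commutator_le]
      intro x hx g _
      have hx' : x ∈ (Subgroup.upperCentralSeries G (i - m) : Set G) *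
          (Subgroup.map H.subtype ((⊤ : Subgroup H).lowerCentralSeries m) : Set G) := by
        rw [← Subgroup.normal_mul]
        exact ih' hx
      obtain ⟨z, hz, k, hk, rfl⟩ := hx'
      obtain ⟨z', hz', h, hh, rfl⟩ := hGH g
      -- k in γ_{m+1}(G)
      have hkG : k ∈ (⊤ : Subgroup G).lowerCentralSeries m := Subgroup.lowerCentralSeries_map_subtype_le H m hk
      set b := z' * h with hb
      have hkb : ⁅k, b⁆ ∈ (⊤ : Subgroup G).lowerCentralSeries (m + 1) := by
        rw [lcs_succ]
        exact Subgroup.commutator_mem_commutator hkG (Subgroup.mem_top _)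
      have hkh : ⁅k, h⁆ ∈ (⊤ : Subgroup G).lowerCentralSeries (m + 1) := by
        rw [lcs_succ]
        exact Subgroup.commutator_mem_commutator hkG (Subgroup.mem_top _)
      -- index facts
      have hi1 : i - m - 1 = i - (m + 1) := by omega
      -- f1 : ⁅z, ⁅k,b⁆⁆ ∈ Z_{i-m-1}
      have f1 : ⁅z, ⁅k, b⁆⁆ ∈ Subgroup.upperCentralSeries G (i - (m + 1)) := by
        rw [← hi1]
        exact my_ucs_base (i - m) (Subgroup.commutator_mem_commutator hz (Subgroup.mem_top _))
      have f3 : ⁅z, b⁆ ∈ Subgroup.upperCentralSeries G (i - (m + 1)) := by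
        rw [← hi1]
        exact my_ucs_base (i - m) (Subgroup.commutator_mem_commutator hz (Subgroup.mem_top _))
      -- f2a : ⁅k, z'⁆ ∈ Z_{i-m-1}
      have f2a : ⁅k, z'⁆ ∈ Subgroup.upperCentralSeries G (i - (m + 1)) :=
        my_lcs_ucs m i (Subgroup.commutator_mem_commutator hkG hz')
      -- f2c : ⁅z', ⁅k,h⁆⁆ ∈ Z_{i-m-1}
      have f2c : ⁅z', ⁅k, h⁆⁆ ∈ Subgroup.upperCentralSeries G (i - (m + 1)) := by
        have : ⁅⁅k, h⁆, z'⁆ ∈ Subgroup.upperCentralSeries G (i - (m + 1 + 1)) :=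
          my_lcs_ucs (m + 1) i (Subgroup.commutator_mem_commutator hkh hz')
        have h2 := (Subgroup.upperCentralSeries_mono G (by omega : i - (m + 1 + 1) ≤ i - (m + 1))) this
        rw [← commutatorElement_inv]
        exact (Subgroup.upperCentralSeries G (i - (m + 1))).inv_mem h2
      -- f2b : ⁅k, h⁆ ∈ map subtype γ_{m+1}(H)
      have f2b : ⁅k, h⁆ ∈ Subgroup.map H.subtype ((⊤ : Subgroup H).lowerCentralSeries (m + 1)) := by
        obtain ⟨k₀, hk₀, rfl⟩ := hk
        refine ⟨⁅k₀, ⟨h, hh⟩⁆, ?_, by simp [commutatorElement_def]⟩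
        show _ ∈ ⁅(⊤ : Subgroup H).lowerCentralSeries m, (⊤ : Subgroup H)⁆
        exact Subgroup.commutator_mem_commutator hk₀ (Subgroup.mem_top _)
      -- the commutator identity
      have idty : ⁅z * k, b⁆ =
          ⁅z, ⁅k, b⁆⁆ * (⁅k, z'⁆ * (⁅z', ⁅k, h⁆⁆ * ⁅k, h⁆)) * ⁅z, b⁆ := by
        rw [hb]
        simp only [commutatorElement_def]
        group
      rw [idty]
      exact Subgroup.mul_mem _
        (Subgroup.mul_mem _ (Subgroup.mem_sup_left f1)
          (Subgroup.mul_mem _ (Subgroup.mem_sup_left f2a)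
            (Subgroup.mul_mem _ (Subgroup.mem_sup_left f2c)
              (Subgroup.mem_sup_right f2b))))
        (Subgroup.mem_sup_left f3)
  intro j hj1 hj2 g hg
  have hmem := key (j - 1) (by omega) hg
  have hx' : g ∈ (Subgroup.upperCentralSeries G (i - (j - 1)) : Set G) *
      (Subgroup.map H.subtype ((⊤ : Subgroup H).lowerCentralSeries (j - 1)) : Set G) := by
    rw [← Subgroup.normal_mul]
    exact hmem
  obtain ⟨z, hz, h, hh, hzh⟩ := hx'
  have e : i - (j - 1) = i - j + 1 := by omega
  rw [e] at hz
  exact ⟨z, hz, h, hh, hzh.symm⟩
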